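/- arXiv:1703.04487 — 2 statements merged into one kernel-verified Lean document; each statement's English description precedes it below -/
import Mathlib

section
/- Let 𝔥 be a finite-dimensional complex vector space with symmetric bilinear form (·,·) and basis h_1, …, h_N. On the polynomial algebra ℂ[x_{i,k} : 1 ≤ i ≤ N, k ≥ 1] define, for each basis vector h_i: ρ(h_i(−k)) = multiplication by x_{i,k} for k ≥ 1; ρ(h_i(k)) = the ℂ-linear derivation determined by ρ(h_i(k))·x_{j,l} = δ_{k,l}·k·(h_i,h_j) for k ≥ 1; ρ(h_i(0)) = 0; and extend ℂ-linearly in the first argument to ρ(α(k)) for all α ∈ 𝔥. Then for all α, β ∈ 𝔥 and all k, l ∈ ℤ, the commutator satisfies ρ(α(k))ρ(β(l)) − ρ(β(l))ρ(α(k)) = k·(α,β)·δ_{k+l,0}·id. In other words, this prescription makes the symmetric algebra S(ĥ_−) into a module over the Heisenberg algebra ĥ = (𝔥 ⊗ ℂ[t,t^{-1}]) ⊕ ℂ𝔠 with 𝔠 acting as the identity. -/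
noncomputable section

open MvPolynomial

lemma my_pderiv_comm {σ : Type*} (i j : σ) (p : MvPolynomial σ ℂ) :
    pderiv i (pderiv j p) = pderiv j (pderiv i p) := by
  classical
  induction p using MvPolynomial.induction_on with
  | C a => simp
  | add p q hp hq => simp [hp, hq]
  | mul_X p n hp =>
      simp only [pderiv_mul, map_add, pderiv_mul, hp]
      rcases eq_or_ne i j with rfl | hij
      · ring
      · simp only [pderiv_X, Pi.single_apply]
        split_ifs <;> simp <;> ring

lemma my_mul_sub_key {σ ι : Type*} [Fintype ι] (P : MvPolynomial σ ℂ) (c : ι → ℂ) (v : ι → σ) :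
    (∑ j, c j • (pderiv (v j)).toLinearMap) * LinearMap.mulLeft ℂ P -
      LinearMap.mulLeft ℂ P * (∑ j, c j • (pderiv (v j)).toLinearMap) =
      LinearMap.mulLeft ℂ (∑ j, c j • pderiv (v j) P) := by
  refine LinearMap.ext fun q => ?_
  simp only [LinearMap.sub_apply, Module.End.mul_apply, LinearMap.sum_apply,
    LinearMap.smul_apply, Derivation.coeFn_coe, LinearMap.mulLeft_apply,
    pderiv_mul, smul_add, Finset.sum_add_distrib, Finset.mul_sum,
    Finset.sum_mul, smul_mul_assoc, mul_smul_comm]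
  abel

lemma my_dd_comm {σ ι κ : Type*} [Fintype ι] [Fintype κ] (c : ι → ℂ) (d : κ → ℂ)
    (v : ι → σ) (w : κ → σ) :
    (∑ j, c j • ((pderiv (v j)).toLinearMap : Module.End ℂ (MvPolynomial σ ℂ))) *
      (∑ i, d i • (pderiv (w i)).toLinearMap) =
    (∑ i, d i • ((pderiv (w i)).toLinearMap : Module.End ℂ (MvPolynomial σ ℂ))) *
      (∑ j, c j • (pderiv (v j)).toLinearMap) := by
  refine LinearMap.ext fun q => ?_
  simp only [Module.End.mul_apply, LinearMap.sum_apply, LinearMap.smul_apply,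
    Derivation.coeFn_coe, map_sum, Derivation.map_smul, Finset.smul_sum]
  rw [Finset.sum_comm]
  refine Finset.sum_congr rfl fun i _ => Finset.sum_congr rfl fun j _ => ?_
  rw [smul_comm, my_pderiv_comm]

lemma my_mulLeft_C {σ : Type*} (c : ℂ) :
    LinearMap.mulLeft ℂ (C c : MvPolynomial σ ℂ) =
      c • (1 : Module.End ℂ (MvPolynomial σ ℂ)) := by
  refine LinearMap.ext fun q => ?_
  simp [smul_eq_C_mul]

/-- The derivative of the generator polynomial. -/
lemma my_pderiv_gen {H : Type*} [AddCommGroup H] [Module ℂ H] {N : ℕ}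
    (b : Module.Basis (Fin N) ℂ H) (γ : H) (j : Fin N) (m n : ℕ) :
    pderiv (j, m) (∑ i, b.repr γ i • X (i, n) : MvPolynomial (Fin N × ℕ) ℂ) =
      if n = m then C (b.repr γ j) else 0 := by
  rw [map_sum]
  by_cases h : n = m
  · subst h
    rw [if_pos rfl, Finset.sum_eq_single j]
    · rw [Derivation.map_smul, pderiv_X_self]
      simp [smul_eq_C_mul]
    · intro i _ hij
      rw [Derivation.map_smul, pderiv_X_of_ne (by simp [hij]), smul_zero]
    · simp
  · rw [if_neg h]
    refine Finset.sum_eq_zero fun i _ => ?_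
    rw [Derivation.map_smul, pderiv_X_of_ne (by simp [h]), smul_zero]

/-- The Fock-space action `ρ(α(k))` of the Heisenberg algebra
`ĥ = (𝔥 ⊗ ℂ[t,t⁻¹]) ⊕ ℂ𝔠` on `S(ĥ₋) = ℂ[x_{i,k} : 1 ≤ i ≤ N, k ≥ 1]`
(the variable `(i,k)` stands for `x_{i,k+1}`):
`ρ(h_i(-k))` is multiplication by `x_{i,k}` for `k ≥ 1`; `ρ(h_i(k))` for `k ≥ 1` is the
derivation with `ρ(h_i(k))·x_{j,l} = δ_{k,l}·k·(h_i,h_j)`; `ρ(h_i(0)) = 0`; extended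
ℂ-linearly in the first argument (via the coordinates `b.repr`). -/
def heisRho {H : Type*} [AddCommGroup H] [Module ℂ H] {N : ℕ}
    (b : Module.Basis (Fin N) ℂ H) (B : H →ₗ[ℂ] H →ₗ[ℂ] ℂ) (α : H) (k : ℤ) :
    Module.End ℂ (MvPolynomial (Fin N × ℕ) ℂ) :=
  if k < 0 then
    LinearMap.mulLeft ℂ (∑ i, b.repr α i • MvPolynomial.X (i, (-k - 1).toNat))
  else if 0 < k then
    ∑ j, ((k : ℂ) * B α (b j)) • (MvPolynomial.pderiv (j, (k - 1).toNat)).toLinearMap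
  else 0

lemma my_sum_repr {H : Type*} [AddCommGroup H] [Module ℂ H] {N : ℕ}
    (b : Module.Basis (Fin N) ℂ H) (B : H →ₗ[ℂ] H →ₗ[ℂ] ℂ) (γ δ : H) (c : ℂ) :
    ∑ j, (c * B γ (b j)) * b.repr δ j = c * B γ δ := by
  conv_rhs => rw [← Module.Basis.sum_repr b δ, map_sum]
  rw [Finset.mul_sum]
  refine Finset.sum_congr rfl fun j _ => ?_
  rw [map_smul, smul_eq_mul]
  ring

/-- commutator of the derivation part (γ, m>0) with the multiplication part (δ, m'<0) -/
lemma my_key2 {H : Type*} [AddCommGroup H] [Module ℂ H] {N : ℕ}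
    (b : Module.Basis (Fin N) ℂ H) (B : H →ₗ[ℂ] H →ₗ[ℂ] ℂ) (γ δ : H) (m m' : ℤ)
    (hm : 0 < m) (hm' : m' < 0) :
    heisRho b B γ m * heisRho b B δ m' - heisRho b B δ m' * heisRho b B γ m =
      if m + m' = 0 then ((m : ℂ) * B γ δ) • (1 : Module.End ℂ (MvPolynomial (Fin N × ℕ) ℂ))
      else 0 := by
  rw [heisRho, heisRho, if_pos hm', if_neg (by omega : ¬ m < 0), if_pos hm,
    my_mul_sub_key]
  by_cases h : m + m' = 0
  · rw [if_pos h]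
    have hmn : (-m' - 1).toNat = (m - 1).toNat := by omega
    have : ∀ j : Fin N,
        pderiv (j, (m - 1).toNat) (∑ i, b.repr δ i • X (i, (-m' - 1).toNat) :
          MvPolynomial (Fin N × ℕ) ℂ) = C (b.repr δ j) := by
      intro j
      rw [my_pderiv_gen b δ j _ _, if_pos hmn]
    simp only [this]
    have : (∑ j, ((m : ℂ) * B γ (b j)) • (C (b.repr δ j) : MvPolynomial (Fin N × ℕ) ℂ)) =
        C (∑ j, ((m : ℂ) * B γ (b j)) * b.repr δ j) := by
      rw [map_sum]
      refine Finset.sum_congr rfl fun j _ => ?_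
      rw [smul_eq_C_mul, ← C_mul]
    rw [this, my_sum_repr b B γ δ, my_mulLeft_C]
  · rw [if_neg h]
    have hmn : ¬ (-m' - 1).toNat = (m - 1).toNat := by omega
    have : ∀ j : Fin N,
        pderiv (j, (m - 1).toNat) (∑ i, b.repr δ i • X (i, (-m' - 1).toNat) :
          MvPolynomial (Fin N × ℕ) ℂ) = 0 := by
      intro j
      rw [my_pderiv_gen b δ j _ _, if_neg hmn]
    simp only [this, smul_zero, Finset.sum_const_zero]
    refine LinearMap.ext fun q => ?_
    simp

/-- for a finite-dimensional complex vector space `𝔥` with symmetric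
bilinear form `B` and basis `h_1, …, h_N`, the operators `ρ(α(k))` above satisfy
`[ρ(α(k)), ρ(β(l))] = k (α,β) δ_{k+l,0} id`; i.e. `S(ĥ₋)` is a module over the
Heisenberg algebra `ĥ` with `𝔠` acting as the identity. -/
theorem heisRho_commutator {H : Type*} [AddCommGroup H] [Module ℂ H] {N : ℕ}
    (b : Module.Basis (Fin N) ℂ H) (B : H →ₗ[ℂ] H →ₗ[ℂ] ℂ)
    (hB : ∀ x y : H, B x y = B y x)
    (α β : H) (k l : ℤ) :
    heisRho b B α k * heisRho b B β l - heisRho b B β l * heisRho b B α k =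
      if k + l = 0 then ((k : ℂ) * B α β) • (1 : Module.End ℂ (MvPolynomial (Fin N × ℕ) ℂ))
      else 0 := by
  rcases lt_trichotomy k 0 with hk | rfl | hk
  · rcases lt_trichotomy l 0 with hl | rfl | hl
    · -- both multiplications
      rw [heisRho, heisRho, if_pos hk, if_pos hl, if_neg (by omega : ¬ k + l = 0),
        sub_eq_zero]
      refine LinearMap.ext fun q => ?_
      simp only [Module.End.mul_apply, LinearMap.mulLeft_apply]
      ring
    · rw [if_neg (by omega : ¬ k + 0 = 0)]
      have h0 : heisRho b B β 0 = 0 := by rw [heisRho]; simp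
      rw [h0, mul_zero, zero_mul, sub_zero]
    · -- k < 0 < l : use my_key2 with roles swapped
      have h := my_key2 b B β α l k hl hk
      have hneg : heisRho b B α k * heisRho b B β l - heisRho b B β l * heisRho b B α k =
          -(heisRho b B β l * heisRho b B α k - heisRho b B α k * heisRho b B β l) :=
        (neg_sub _ _).symm
      rw [hneg, h]
      by_cases hkl : k + l = 0
      · rw [if_pos (by omega : l + k = 0), if_pos hkl]
        have hc : (k : ℂ) * B α β = -((l : ℂ) * B β α) := by
          have hlk : l = -k := by omega
          rw [hB β α, hlk]; push_cast; ring
        rw [hc]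
        exact (neg_smul _ _).symm
      · rw [if_neg (by omega : ¬ l + k = 0), if_neg hkl, neg_zero]
  · have h0 : heisRho b B α 0 = 0 := by rw [heisRho]; simp
    rw [h0, mul_zero, zero_mul, sub_zero]
    by_cases h : (0 : ℤ) + l = 0
    · rw [if_pos h]; simp
    · rw [if_neg h]
  · rcases lt_trichotomy l 0 with hl | rfl | hl
    · exact my_key2 b B α β k l hk hl
    · rw [if_neg (by omega : ¬ k + 0 = 0)]
      have h0 : heisRho b B β 0 = 0 := by rw [heisRho]; simp
      rw [h0, mul_zero, zero_mul, sub_zero]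
    · -- both derivations
      rw [heisRho, heisRho, if_neg (by omega : ¬ k < 0), if_pos hk,
        if_neg (by omega : ¬ l < 0), if_pos hl, if_neg (by omega : ¬ k + l = 0),
        sub_eq_zero]
      exact my_dd_comm _ _ _ _

end
end

section
/- Let {a(k), a*(k) : k ∈ ℤ} be a locally annihilating bosonic Weyl system on a complex vector space W over S = {a, a*} with pairing ⟨a, a*⟩ = −1, ⟨a*, a⟩ = 1, ⟨a,a⟩ = ⟨a*,a*⟩ = 0. Define H(m) := (:aa*:)(m) = Σ_{j<0} a(j)a*(m−j) + Σ_{j≥0} a*(m−j)a(j). Then for all m, n ∈ ℤ: H(m)H(n) − H(n)H(m) = −m·δ_{m+n,0}·id. That is, the normally ordered bilinear current of a single Weyl (βγ-)pair realizes a Heisenberg algebra at level −1. -/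
noncomputable section

/-- A *bosonic Weyl system* over a set `S` of symbols with pairing `pair : S → S → ℂ`
on a complex vector space `W`: a family of operators `op u k` (`u ∈ S`, `k ∈ ℤ`)
such that `[op u k, op v l] = ⟨u,v⟩ δ_{k+l,0} id`. -/
def IsBosonicWeylSystem {S W : Type*} [AddCommGroup W] [Module ℂ W]
    (pair : S → S → ℂ) (op : S → ℤ → Module.End ℂ W) : Prop :=
  ∀ u v : S, ∀ k l : ℤ,
    op u k * op v l - op v l * op u k =
      if k + l = 0 then pair u v • (1 : Module.End ℂ W) else 0

/-- A family of operators is *locally annihilating* if for every vector `w` and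
every symbol `u`, `op u k w = 0` for all sufficiently large `k`. -/
def LocallyAnnihilating {S W : Type*} [AddCommGroup W] [Module ℂ W]
    (op : S → ℤ → Module.End ℂ W) : Prop :=
  ∀ (w : W) (u : S), ∃ K : ℤ, ∀ k : ℤ, K ≤ k → op u k w = 0

/-- The normally ordered quadratic mode
`(:uv:)(m) = Σ_{j<0} u(j)v(m-j) + Σ_{j≥0} v(m-j)u(j)` applied to a vector `w`;
on a locally annihilating system all but finitely many summands vanish, so the
`finsum` computes the intended (finite) sum. -/
def noMode {S W : Type*} [AddCommGroup W] [Module ℂ W]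
    (op : S → ℤ → Module.End ℂ W) (u v : S) (m : ℤ) (w : W) : W :=
  ∑ᶠ j : ℤ, if j < 0 then op u j (op v (m - j) w) else op v (m - j) (op u j w)

end

/-- The pairing on `S = {a, a*}` (with `false = a`, `true = a*`):
`⟨a,a*⟩ = -1`, `⟨a*,a⟩ = 1`, `⟨a,a⟩ = ⟨a*,a*⟩ = 0`. -/
def pairAAstar : Bool → Bool → ℂ
  | false, true => -1
  | true, false => 1
  | _, _ => 0

section Aux

variable {W : Type*} [AddCommGroup W] [Module ℂ W] (op : Bool → ℤ → Module.End ℂ W)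

/-- The summand of `noMode op false true`. -/
def Fj (m : ℤ) (w : W) (j : ℤ) : W :=
  if j < 0 then op false j (op true (m - j) w) else op true (m - j) (op false j w)

lemma noMode_eq_finsum (m : ℤ) (w : W) :
    noMode op false true m w = ∑ᶠ j, Fj op m w j := rfl

lemma comm_tf (hW : IsBosonicWeylSystem pairAAstar op) (k l : ℤ) (w : W) :
    op true k (op false l w) = op false l (op true k w) + (if k + l = 0 then w else 0) := by
  have h := LinearMap.congr_fun (hW true false k l) w
  simp only [LinearMap.sub_apply, Module.End.mul_apply] at h
  rw [apply_ite (fun f : Module.End ℂ W => f w)] at h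
  simp only [LinearMap.smul_apply, Module.End.one_apply, LinearMap.zero_apply,
    pairAAstar, one_smul] at h
  rw [sub_eq_iff_eq_add'] at h
  exact h

lemma comm_ft (hW : IsBosonicWeylSystem pairAAstar op) (k l : ℤ) (w : W) :
    op false k (op true l w) = op true l (op false k w) + (if k + l = 0 then -w else 0) := by
  have h := LinearMap.congr_fun (hW false true k l) w
  simp only [LinearMap.sub_apply, Module.End.mul_apply] at h
  rw [apply_ite (fun f : Module.End ℂ W => f w)] at h
  simp only [LinearMap.smul_apply, Module.End.one_apply, LinearMap.zero_apply,
    pairAAstar, neg_smul, one_smul] at h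
  rw [sub_eq_iff_eq_add'] at h
  exact h

lemma comm_ff (hW : IsBosonicWeylSystem pairAAstar op) (k l : ℤ) (w : W) :
    op false k (op false l w) = op false l (op false k w) := by
  have h := LinearMap.congr_fun (hW false false k l) w
  simp only [LinearMap.sub_apply, Module.End.mul_apply] at h
  rw [apply_ite (fun f : Module.End ℂ W => f w)] at h
  simp only [LinearMap.smul_apply, Module.End.one_apply, LinearMap.zero_apply,
    pairAAstar, zero_smul, ite_self] at h
  exact sub_eq_zero.mp h

lemma comm_tt (hW : IsBosonicWeylSystem pairAAstar op) (k l : ℤ) (w : W) :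
    op true k (op true l w) = op true l (op true k w) := by
  have h := LinearMap.congr_fun (hW true true k l) w
  simp only [LinearMap.sub_apply, Module.End.mul_apply] at h
  rw [apply_ite (fun f : Module.End ℂ W => f w)] at h
  simp only [LinearMap.smul_apply, Module.End.one_apply, LinearMap.zero_apply,
    pairAAstar, zero_smul, ite_self] at h
  exact sub_eq_zero.mp h

lemma Fj_suppFinset (hA : LocallyAnnihilating op) (m : ℤ) (w : W) :
    ∃ t : Finset ℤ, Function.support (Fj op m w) ⊆ ↑t := by
  obtain ⟨K1, h1⟩ := hA w false
  obtain ⟨K2, h2⟩ := hA w true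
  refine ⟨Finset.Icc (min 0 (m - K2)) (max 0 K1), ?_⟩
  intro j hj
  simp only [Function.mem_support] at hj
  simp only [Finset.coe_Icc, Set.mem_Icc]
  constructor
  · by_contra hc
    push_neg at hc
    have hj0 : j < 0 := by omega
    have hK : K2 ≤ m - j := by omega
    exact hj (by simp [Fj, hj0, h2 _ hK])
  · by_contra hc
    push_neg at hc
    have hj0 : ¬ j < 0 := by omega
    have hK : K1 ≤ j := by omega
    exact hj (by simp [Fj, hj0, h1 _ hK])

lemma Fj_supportFinite (hA : LocallyAnnihilating op) (m : ℤ) (w : W) :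
    (Function.support (Fj op m w)).Finite := by
  obtain ⟨t, ht⟩ := Fj_suppFinset op hA m w
  exact Set.Finite.subset t.finite_toSet ht

lemma noMode_eq_sum {m : ℤ} {w : W} {s : Finset ℤ}
    (h : Function.support (Fj op m w) ⊆ ↑s) :
    noMode op false true m w = ∑ j ∈ s, Fj op m w j :=
  finsum_eq_sum_of_support_subset _ h

lemma noMode_add (hA : LocallyAnnihilating op) (m : ℤ) (w1 w2 : W) :
    noMode op false true m (w1 + w2) =
      noMode op false true m w1 + noMode op false true m w2 := by
  have key : ∀ j, Fj op m (w1 + w2) j = Fj op m w1 j + Fj op m w2 j := by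
    intro j
    by_cases hj : j < 0 <;> simp [Fj, hj, map_add]
  rw [noMode_eq_finsum, noMode_eq_finsum, noMode_eq_finsum, finsum_congr key,
    finsum_add_distrib (Fj_supportFinite op hA m w1) (Fj_supportFinite op hA m w2)]

/-- `noMode` as an additive map. -/
noncomputable def Hhom (hA : LocallyAnnihilating op) (m : ℤ) : W →+ W where
  toFun := noMode op false true m
  map_zero' := by
    rw [noMode_eq_finsum]
    have : ∀ j, Fj op m (0 : W) j = 0 := by
      intro j; by_cases hj : j < 0 <;> simp [Fj, hj]
    rw [finsum_congr this, finsum_zero]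
  map_add' := noMode_add op hA m

lemma noMode_finset_sum (hA : LocallyAnnihilating op) (m : ℤ) (s : Finset ℤ) (f : ℤ → W) :
    noMode op false true m (∑ j ∈ s, f j) = ∑ j ∈ s, noMode op false true m (f j) :=
  map_sum (Hhom op hA m) f s

lemma H_comm_a (hW : IsBosonicWeylSystem pairAAstar op) (hA : LocallyAnnihilating op) (m k : ℤ) (w : W) :
    noMode op false true m (op false k w) =
      op false k (noMode op false true m w) + op false (m + k) w := by
  have key : ∀ j, Fj op m (op false k w) j =
      op false k (Fj op m w j) + (if j = m + k then op false (m + k) w else 0) := by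
    intro j
    by_cases hj : j < 0
    · simp only [Fj, if_pos hj]
      rw [comm_tf op hW (m - j) k w, map_add, comm_ff op hW j k]
      congr 1
      by_cases h0 : m - j + k = 0
      · have hj' : j = m + k := by omega
        subst hj'
        simp [h0]
      · have hj' : ¬ j = m + k := by omega
        simp [h0, hj']
    · simp only [Fj, if_neg hj]
      rw [comm_ff op hW j k w, comm_tf op hW (m - j) k]
      congr 1
      by_cases h0 : m - j + k = 0
      · have hj' : j = m + k := by omega
        subst hj'
        simp [h0]
      · have hj' : ¬ j = m + k := by omega
        simp [h0, hj']
  obtain ⟨t1, ht1⟩ := Fj_suppFinset op hA m w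
  obtain ⟨t2, ht2⟩ := Fj_suppFinset op hA m (op false k w)
  set s : Finset ℤ := (t1 ∪ t2) ∪ {m + k} with hs
  have hsub1 : Function.support (Fj op m w) ⊆ ↑s := by
    refine ht1.trans ?_
    intro x hx; simp [hs]; tauto
  have hsub2 : Function.support (Fj op m (op false k w)) ⊆ ↑s := by
    refine ht2.trans ?_
    intro x hx; simp [hs]; tauto
  rw [noMode_eq_sum op hsub2, noMode_eq_sum op hsub1,
    Finset.sum_congr rfl (fun j _ => key j), Finset.sum_add_distrib, ← map_sum]
  congr 1
  rw [Finset.sum_ite_eq' s (m + k) (fun _ => op false (m + k) w)]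
  simp [hs]

lemma H_comm_astar (hW : IsBosonicWeylSystem pairAAstar op) (hA : LocallyAnnihilating op) (m k : ℤ) (w : W) :
    noMode op false true m (op true k w) =
      op true k (noMode op false true m w) - op true (m + k) w := by
  have key : ∀ j, Fj op m (op true k w) j =
      op true k (Fj op m w j) - (if j = -k then op true (m + k) w else 0) := by
    intro j
    by_cases hj : j < 0
    · simp only [Fj, if_pos hj]
      rw [comm_tt op hW (m - j) k w, comm_ft op hW j k]
      have hcor : (if j + k = 0 then -(op true (m - j) w) else 0) =
          -(if j = -k then op true (m + k) w else 0) := by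
        by_cases h0 : j + k = 0
        · have hj' : j = -k := by omega
          have hmk : m - j = m + k := by omega
          rw [if_pos h0, if_pos hj', hmk]
        · have hj' : ¬ j = -k := by omega
          rw [if_neg h0, if_neg hj', neg_zero]
      rw [hcor, ← sub_eq_add_neg]
    · simp only [Fj, if_neg hj]
      rw [comm_ft op hW j k w, map_add, comm_tt op hW (m - j) k]
      have hcor : op true (m - j) (if j + k = 0 then -w else 0) =
          -(if j = -k then op true (m + k) w else 0) := by
        by_cases h0 : j + k = 0
        · have hj' : j = -k := by omega
          have hmk : m - j = m + k := by omega
          rw [if_pos h0, if_pos hj', hmk, map_neg]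
        · have hj' : ¬ j = -k := by omega
          rw [if_neg h0, if_neg hj', map_zero, neg_zero]
      rw [hcor, ← sub_eq_add_neg]
  obtain ⟨t1, ht1⟩ := Fj_suppFinset op hA m w
  obtain ⟨t2, ht2⟩ := Fj_suppFinset op hA m (op true k w)
  set s : Finset ℤ := (t1 ∪ t2) ∪ {-k} with hs
  have hsub1 : Function.support (Fj op m w) ⊆ ↑s := by
    refine ht1.trans ?_
    intro x hx; simp [hs]; tauto
  have hsub2 : Function.support (Fj op m (op true k w)) ⊆ ↑s := by
    refine ht2.trans ?_
    intro x hx; simp [hs]; tauto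
  rw [noMode_eq_sum op hsub2, noMode_eq_sum op hsub1,
    Finset.sum_congr rfl (fun j _ => key j), Finset.sum_sub_distrib, ← map_sum]
  congr 1
  rw [Finset.sum_ite_eq' s (-k) (fun _ => op true (m + k) w)]
  simp [hs]

end Aux

/-- for a locally annihilating bosonic Weyl system `{a(k), a*(k)}` with
`⟨a,a*⟩ = -1`, `⟨a*,a⟩ = 1`, the modes `H(m) = (:aa*:)(m)` of the normally ordered
bilinear current satisfy `[H(m), H(n)] = -m δ_{m+n,0} id`: a Heisenberg algebra at
level `-1`. -/
theorem weyl_pair_current_heisenberg {W : Type*} [AddCommGroup W] [Module ℂ W]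
    (op : Bool → ℤ → Module.End ℂ W)
    (hW : IsBosonicWeylSystem pairAAstar op) (hA : LocallyAnnihilating op)
    (m n : ℤ) (w : W) :
    noMode op false true m (noMode op false true n w) -
      noMode op false true n (noMode op false true m w) =
      if m + n = 0 then (-(m : ℂ)) • w else 0 := by
  classical
  obtain ⟨t1, ht1⟩ := Fj_suppFinset op hA n w
  obtain ⟨t2, ht2⟩ := Fj_suppFinset op hA n (noMode op false true m w)
  obtain ⟨t3, ht3⟩ := Fj_suppFinset op hA (m + n) w
  set g : ℤ → W := Fj op (m + n) w with hg
  set eC : ℤ → ℂ := fun j =>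
    if m + n = 0 then
      (if j < 0 ∧ 0 ≤ m + j then (-1 : ℂ) else if 0 ≤ j ∧ m + j < 0 then 1 else 0)
    else 0 with heC
  set I : Finset ℤ := Finset.Ico (min 0 (-m)) (max 0 (-m)) with hI
  set s : Finset ℤ := ((t1 ∪ t2) ∪ (t3 ∪ t3.image (fun x => x - m))) ∪ I with hs
  have hsub1 : Function.support (Fj op n w) ⊆ ↑s :=
    ht1.trans (by intro x hx; simp only [hs, Finset.coe_union, Set.mem_union]; tauto)
  have hsub2 : Function.support (Fj op n (noMode op false true m w)) ⊆ ↑s :=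
    ht2.trans (by intro x hx; simp only [hs, Finset.coe_union, Set.mem_union]; tauto)
  have hg_mem : ∀ x, g x ≠ 0 → x ∈ s := by
    intro x hx
    have hx3 : x ∈ t3 := ht3 (Function.mem_support.mpr hx)
    simp only [hs, Finset.mem_union]
    tauto
  have hg_mem' : ∀ x, g x ≠ 0 → x - m ∈ s := by
    intro x hx
    have hx3 : x ∈ t3 := ht3 (Function.mem_support.mpr hx)
    have hx4 : x - m ∈ t3.image (fun x => x - m) := Finset.mem_image_of_mem _ hx3
    simp only [hs, Finset.mem_union]
    tauto
  have hIs : I ⊆ s := by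
    intro x hx; simp only [hs, Finset.mem_union]; tauto
  -- the key pointwise commutator identity
  have key : ∀ j : ℤ, noMode op false true m (Fj op n w j) =
      Fj op n (noMode op false true m w) j + ((g (m + j) - g j) + eC j • w) := by
    intro j
    have hsmul : eC j • w = (if m + n = 0 then
        (if j < 0 ∧ 0 ≤ m + j then -w else if 0 ≤ j ∧ m + j < 0 then w else 0) else 0) := by
      simp only [heC]
      split_ifs <;> simp
    rw [hsmul]
    by_cases hj : j < 0
    · simp only [Fj, if_pos hj]
      rw [H_comm_a op hW hA m j, H_comm_astar op hW hA m (n - j), map_sub,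
        show m + (n - j) = m + n - j from by ring]
      have hgj : g j = op false j (op true (m + n - j) w) := by
        rw [hg]; simp only [Fj, if_pos hj]
      by_cases hmj : m + j < 0
      · have hgmj : g (m + j) = op false (m + j) (op true (n - j) w) := by
          rw [hg]; simp only [Fj, if_pos hmj, show m + n - (m + j) = n - j from by ring]
        have hc1 : ¬(j < 0 ∧ 0 ≤ m + j) := by omega
        have hc2 : ¬(0 ≤ j ∧ m + j < 0) := by omega
        simp only [hc1, hc2, if_false, ite_self]
        rw [hgj, hgmj]
        abel
      · have hmj' : 0 ≤ m + j := by omega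
        have hgmj : g (m + j) = op true (n - j) (op false (m + j) w) := by
          rw [hg]; simp only [Fj, if_neg hmj, show m + n - (m + j) = n - j from by ring]
        rw [comm_ft op hW (m + j) (n - j) w,
          show m + j + (n - j) = m + n from by ring]
        have hc1 : (j < 0 ∧ 0 ≤ m + j) := ⟨hj, hmj'⟩
        simp only [hc1, and_self, if_true]
        rw [hgj, hgmj]
        abel
    · simp only [Fj, if_neg hj]
      rw [H_comm_astar op hW hA m (n - j), H_comm_a op hW hA m j, map_add,
        show m + (n - j) = m + n - j from by ring]
      have hgj : g j = op true (m + n - j) (op false j w) := by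
        rw [hg]; simp only [Fj, if_neg hj]
      by_cases hmj : m + j < 0
      · have hgmj : g (m + j) = op false (m + j) (op true (n - j) w) := by
          rw [hg]; simp only [Fj, if_pos hmj, show m + n - (m + j) = n - j from by ring]
        have hkey : op true (n - j) (op false (m + j) w) =
            g (m + j) - (if m + n = 0 then -w else 0) := by
          rw [hgmj, comm_ft op hW (m + j) (n - j) w,
            show m + j + (n - j) = m + n from by ring]
          abel
        rw [hkey]
        have hc1 : ¬(j < 0 ∧ 0 ≤ m + j) := by omega
        have hc2 : (0 ≤ j ∧ m + j < 0) := ⟨by omega, hmj⟩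
        simp only [hc1, if_false, hc2, and_self, if_true]
        rw [hgj, show (if m + n = 0 then w else 0) = -(if m + n = 0 then -w else 0) from by
          split_ifs <;> simp]
        abel
      · have hgmj : g (m + j) = op true (n - j) (op false (m + j) w) := by
          rw [hg]; simp only [Fj, if_neg hmj, show m + n - (m + j) = n - j from by ring]
        have hc1 : ¬(j < 0 ∧ 0 ≤ m + j) := by omega
        have hc2 : ¬(0 ≤ j ∧ m + j < 0) := by omega
        simp only [hc1, hc2, if_false, ite_self]
        rw [hgj, hgmj]
        abel
  -- assemble
  rw [noMode_eq_sum op hsub1, noMode_finset_sum op hA m s, noMode_eq_sum op hsub2,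
    Finset.sum_congr rfl (fun j _ => key j), Finset.sum_add_distrib, add_sub_cancel_left,
    Finset.sum_add_distrib, Finset.sum_sub_distrib, ← Finset.sum_smul]
  have hshift : ∑ j ∈ s, g (m + j) = ∑ j ∈ s, g j := by
    have hmem' : ∀ x, g x ≠ 0 → x ∈ s.map (addLeftEmbedding m) := by
      intro x hx
      refine Finset.mem_map.mpr ⟨x - m, hg_mem' x hx, ?_⟩
      simp [addLeftEmbedding_apply]
    calc ∑ j ∈ s, g (m + j)
        = ∑ j ∈ s.map (addLeftEmbedding m), g j := by
          rw [Finset.sum_map]; simp only [addLeftEmbedding_apply]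
      _ = ∑ j ∈ s ∪ s.map (addLeftEmbedding m), g j := by
          apply Finset.sum_subset Finset.subset_union_right
          intro x _ hxs
          by_contra hgx
          exact hxs (hmem' x hgx)
      _ = ∑ j ∈ s, g j := by
          symm
          apply Finset.sum_subset Finset.subset_union_left
          intro x _ hxs
          by_contra hgx
          exact hxs (hg_mem x hgx)
  have heSum : ∑ j ∈ s, eC j = if m + n = 0 then -(m : ℂ) else 0 := by
    have hvan : ∀ x ∈ s, x ∉ I → eC x = 0 := by
      intro x _ hxI
      simp only [hI, Finset.mem_Ico] at hxI
      simp only [heC]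
      split_ifs with h1 h2 h3 <;> first | rfl | (exfalso; omega)
    rw [← Finset.sum_subset hIs hvan]
    by_cases hmn : m + n = 0
    · rw [if_pos hmn]
      rcases lt_trichotomy m 0 with hm | hm | hm
      · have hIeq : I = Finset.Ico (0 : ℤ) (-m) := by rw [hI]; congr 1 <;> omega
        have hval : ∀ j ∈ I, eC j = 1 := by
          intro j hj
          rw [hIeq, Finset.mem_Ico] at hj
          simp only [heC]
          rw [if_pos hmn, if_neg (by omega), if_pos (by omega)]
        rw [Finset.sum_congr rfl hval, Finset.sum_const, hIeq, Int.card_Ico,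
          nsmul_eq_mul, mul_one, show (-m - 0 : ℤ) = -m from by ring,
          ← Int.cast_natCast (R := ℂ), Int.toNat_of_nonneg (by omega)]
        push_cast
        ring
      · have hIeq : I = (∅ : Finset ℤ) := by
          rw [hI, hm]; simp
        rw [hIeq, Finset.sum_empty, hm]
        simp
      · have hIeq : I = Finset.Ico (-m) (0 : ℤ) := by rw [hI]; congr 1 <;> omega
        have hval : ∀ j ∈ I, eC j = -1 := by
          intro j hj
          rw [hIeq, Finset.mem_Ico] at hj
          simp only [heC]
          rw [if_pos hmn, if_pos (by omega)]
        rw [Finset.sum_congr rfl hval, Finset.sum_const, hIeq, Int.card_Ico,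
          nsmul_eq_mul, show (0 - -m : ℤ) = m from by ring,
          ← Int.cast_natCast (R := ℂ), Int.toNat_of_nonneg (by omega)]
        ring
    · rw [if_neg hmn]
      apply Finset.sum_eq_zero
      intro x _
      simp [heC, hmn]
  rw [hshift, sub_self, zero_add, heSum]
  split_ifs with hmn
  · rfl
  · rw [zero_smul]
end
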